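/- The Lagrange interpolation polynomials of type A satisfy the recurrence f_i^{(n)}(a₁,a₂;t;z₁,…,z_n) = (z_n − a₂t^{n−i})/(a₁t^{i−1} − a₂t^{n−i}) · f_{i−1}^{(n−1)}(a₁,a₂;t;z₁,…,z_{n−1}) + (z_n − a₁t^{i})/(a₂t^{n−i−1} − a₁t^{i}) · f_{i}^{(n−1)}(a₁,a₂;t;z₁,…,z_{n−1}) for i = 0,1,…,n, with the conventions f_{-1}^{(n−1)} = 0 and f_{n}^{(n−1)} = 0. -/

import Mathlib

open scoped BigOperators

/-- The k-th element (0-indexed) of a finite set of naturals, listed increasingly. -/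
def sortedEl (I : Finset ℕ) (k : ℕ) : ℕ := (I.sort (· ≤ ·)).getD k 0

/-- The Lagrange interpolation polynomial of type A:
f_r(a₁,a₂;t;z) = ∑_{I⊆{1,…,n},|I|=r} ∏_{k=1}^{r}(z_{i_k}−a₂t^{i_k−k})/(a₁t^{k−1}−a₂t^{i_k−k})
  ∏_{l=1}^{n−r}(z_{j_l}−a₁t^{j_l−l})/(a₂t^{l−1}−a₁t^{j_l−l}),
where I = {i₁<⋯<i_r} and {1,…,n}∖I = {j₁<⋯<j_{n−r}}; z is indexed by 1,…,n. -/
noncomputable def lagrangeF (a₁ a₂ t : ℂ) (n r : ℕ) (z : ℕ → ℂ) : ℂ :=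
  ∑ I ∈ Finset.powersetCard r (Finset.Icc 1 n),
    (∏ k ∈ Finset.range r,
        (z (sortedEl I k) - a₂ * t ^ (sortedEl I k - (k + 1))) /
          (a₁ * t ^ k - a₂ * t ^ (sortedEl I k - (k + 1)))) *
      ∏ l ∈ Finset.range (n - r),
        (z (sortedEl ((Finset.Icc 1 n) \ I) l) -
            a₁ * t ^ (sortedEl ((Finset.Icc 1 n) \ I) l - (l + 1))) /
          (a₂ * t ^ l - a₁ * t ^ (sortedEl ((Finset.Icc 1 n) \ I) l - (l + 1)))

/-- The summand of `lagrangeF` as a function of the index set. -/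
noncomputable def termF (a₁ a₂ t : ℂ) (n r : ℕ) (z : ℕ → ℂ) (I : Finset ℕ) : ℂ :=
  (∏ k ∈ Finset.range r,
      (z (sortedEl I k) - a₂ * t ^ (sortedEl I k - (k + 1))) /
        (a₁ * t ^ k - a₂ * t ^ (sortedEl I k - (k + 1)))) *
    ∏ l ∈ Finset.range (n - r),
      (z (sortedEl ((Finset.Icc 1 n) \ I) l) -
          a₁ * t ^ (sortedEl ((Finset.Icc 1 n) \ I) l - (l + 1))) /
        (a₂ * t ^ l - a₁ * t ^ (sortedEl ((Finset.Icc 1 n) \ I) l - (l + 1)))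

lemma lagrangeF_eq_sum (a₁ a₂ t : ℂ) (n r : ℕ) (z : ℕ → ℂ) :
    lagrangeF a₁ a₂ t n r z =
      ∑ I ∈ Finset.powersetCard r (Finset.Icc 1 n), termF a₁ a₂ t n r z I := rfl

lemma sort_insert_max {s : Finset ℕ} {a : ℕ} (h₁ : ∀ b ∈ s, b ≤ a) (h₂ : a ∉ s) :
    (insert a s).sort (· ≤ ·) = s.sort (· ≤ ·) ++ [a] := by
  have hp : ((insert a s).sort (· ≤ ·) : List ℕ).Perm (a :: s.sort (· ≤ ·)) := by
    rw [← Multiset.coe_eq_coe]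
    have e1 : ((insert a s).sort (· ≤ ·) : Multiset ℕ) = (insert a s).val :=
      Finset.sort_eq _ _
    have e2 : ((s.sort (· ≤ ·) : List ℕ) : Multiset ℕ) = s.val := Finset.sort_eq _ _
    rw [e1, Finset.insert_val_of_notMem h₂, ← Multiset.cons_coe, e2]
  have hsorted : List.Pairwise (· ≤ ·) (s.sort (· ≤ ·) ++ [a]) := by
    refine List.pairwise_append.mpr ⟨Finset.pairwise_sort _ _, List.pairwise_singleton _ _, ?_⟩
    intro x hx y hy
    simp only [List.mem_singleton] at hy
    subst hy
    exact h₁ x (Finset.mem_sort (· ≤ ·) |>.mp hx)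
  exact List.Perm.eq_of_pairwise' (Finset.pairwise_sort _ _) hsorted
    (hp.trans (List.perm_append_singleton a _).symm)

lemma sortedEl_insert_lt {s : Finset ℕ} {a : ℕ} (h₁ : ∀ b ∈ s, b ≤ a) (h₂ : a ∉ s)
    {k : ℕ} (hk : k < s.card) : sortedEl (insert a s) k = sortedEl s k := by
  unfold sortedEl
  rw [sort_insert_max h₁ h₂, List.getD_append]
  rwa [Finset.length_sort]

lemma sortedEl_insert_eq {s : Finset ℕ} {a : ℕ} (h₁ : ∀ b ∈ s, b ≤ a) (h₂ : a ∉ s) :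
    sortedEl (insert a s) s.card = a := by
  unfold sortedEl
  rw [sort_insert_max h₁ h₂, List.getD_append_right _ _ _ _ (by simp)]
  simp

/-- Case n ∉ I. -/
lemma termA (a₁ a₂ t : ℂ) (z : ℕ → ℂ) (m i : ℕ) (I : Finset ℕ)
    (hI : I ∈ Finset.powersetCard i (Finset.Icc 1 m)) :
    termF a₁ a₂ t (m + 1) i z I =
      (z (m + 1) - a₁ * t ^ i) / (a₂ * t ^ (m - i) - a₁ * t ^ i) *
        termF a₁ a₂ t m i z I := by
  obtain ⟨hsub, hcard⟩ := Finset.mem_powersetCard.mp hI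
  have hIle : ∀ x ∈ I, x ≤ m := fun x hx => (Finset.mem_Icc.mp (hsub hx)).2
  have hi : i ≤ m := by
    rw [← hcard]
    simpa using Finset.card_le_card hsub
  have hmem : ∀ b ∈ Finset.Icc 1 m \ I, b ≤ m + 1 := by
    intro b hb
    have := (Finset.mem_Icc.mp (Finset.mem_sdiff.mp hb).1).2
    omega
  have hnot : (m + 1) ∉ Finset.Icc 1 m \ I := by
    simp [Finset.mem_Icc]
  have hcompl : Finset.Icc 1 (m + 1) \ I = insert (m + 1) (Finset.Icc 1 m \ I) := by
    ext x
    simp only [Finset.mem_sdiff, Finset.mem_Icc, Finset.mem_insert]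
    constructor
    · rintro ⟨⟨h1, h2⟩, h3⟩
      rcases Nat.lt_or_ge x (m + 1) with h | h
      · exact Or.inr ⟨⟨h1, by omega⟩, h3⟩
      · exact Or.inl (by omega)
    · rintro (rfl | ⟨⟨h1, h2⟩, h3⟩)
      · exact ⟨⟨by omega, le_refl _⟩, fun hxI => by have := hIle _ hxI; omega⟩
      · exact ⟨⟨h1, by omega⟩, h3⟩
  have hcardc : (Finset.Icc 1 m \ I).card = m - i := by
    rw [Finset.card_sdiff_of_subset hsub, hcard, Nat.card_Icc]
    omega
  unfold termF
  rw [hcompl]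
  have hlast : sortedEl (insert (m + 1) (Finset.Icc 1 m \ I)) (m - i) = m + 1 := by
    rw [← hcardc]; exact sortedEl_insert_eq hmem hnot
  have hQ : (∏ l ∈ Finset.range (m - i),
        (z (sortedEl (insert (m + 1) (Finset.Icc 1 m \ I)) l) -
            a₁ * t ^ (sortedEl (insert (m + 1) (Finset.Icc 1 m \ I)) l - (l + 1))) /
          (a₂ * t ^ l - a₁ * t ^ (sortedEl (insert (m + 1) (Finset.Icc 1 m \ I)) l - (l + 1)))) =
      ∏ l ∈ Finset.range (m - i),
        (z (sortedEl (Finset.Icc 1 m \ I) l) -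
            a₁ * t ^ (sortedEl (Finset.Icc 1 m \ I) l - (l + 1))) /
          (a₂ * t ^ l - a₁ * t ^ (sortedEl (Finset.Icc 1 m \ I) l - (l + 1))) :=
    Finset.prod_congr rfl (fun l hl => by
      rw [sortedEl_insert_lt hmem hnot (by rw [hcardc]; exact Finset.mem_range.mp hl)])
  rw [show (m + 1) - i = (m - i) + 1 by omega, Finset.prod_range_succ, hQ, hlast,
    show (m + 1) - (m - i + 1) = i by omega]
  ring

/-- Case n ∈ I. -/
lemma termB (a₁ a₂ t : ℂ) (z : ℕ → ℂ) (m j : ℕ) (I : Finset ℕ)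
    (hI : I ∈ Finset.powersetCard j (Finset.Icc 1 m)) :
    termF a₁ a₂ t (m + 1) (j + 1) z (insert (m + 1) I) =
      (z (m + 1) - a₂ * t ^ (m - j)) / (a₁ * t ^ j - a₂ * t ^ (m - j)) *
        termF a₁ a₂ t m j z I := by
  obtain ⟨hsub, hcard⟩ := Finset.mem_powersetCard.mp hI
  have hIle : ∀ x ∈ I, x ≤ m := fun x hx => (Finset.mem_Icc.mp (hsub hx)).2
  have hmem : ∀ b ∈ I, b ≤ m + 1 := fun b hb => by have := hIle b hb; omega
  have hnot : (m + 1) ∉ I := fun hc => by have := hIle _ hc; omega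
  have hcompl : Finset.Icc 1 (m + 1) \ insert (m + 1) I = Finset.Icc 1 m \ I := by
    ext x
    simp only [Finset.mem_sdiff, Finset.mem_Icc, Finset.mem_insert, not_or]
    constructor
    · rintro ⟨⟨h1, h2⟩, h3, h4⟩
      exact ⟨⟨h1, by omega⟩, h4⟩
    · rintro ⟨⟨h1, h2⟩, h3⟩
      exact ⟨⟨h1, by omega⟩, by omega, h3⟩
  unfold termF
  rw [hcompl]
  have hlast : sortedEl (insert (m + 1) I) j = m + 1 := by
    rw [← hcard]; exact sortedEl_insert_eq hmem hnot
  have hQ : (∏ k ∈ Finset.range j,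
        (z (sortedEl (insert (m + 1) I) k) -
            a₂ * t ^ (sortedEl (insert (m + 1) I) k - (k + 1))) /
          (a₁ * t ^ k - a₂ * t ^ (sortedEl (insert (m + 1) I) k - (k + 1)))) =
      ∏ k ∈ Finset.range j,
        (z (sortedEl I k) - a₂ * t ^ (sortedEl I k - (k + 1))) /
          (a₁ * t ^ k - a₂ * t ^ (sortedEl I k - (k + 1))) :=
    Finset.prod_congr rfl (fun k hk => by
      rw [sortedEl_insert_lt hmem hnot (by rw [hcard]; exact Finset.mem_range.mp hk)])
  rw [Finset.prod_range_succ, hQ, hlast, show (m + 1) - (j + 1) = m - j by omega]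
  ring

/-- Recurrence relation for the Lagrange interpolation polynomials of type A,
with the conventions f_{−1}^{(n−1)} = 0 and f_n^{(n−1)} = 0. -/
theorem lagrange_recurrence (n : ℕ) (hn : 1 ≤ n) (i : ℕ) (hi : i ≤ n) (a₁ a₂ t : ℂ)
    (ha₁ : a₁ ≠ 0) (ha₂ : a₂ ≠ 0) (ht : t ≠ 0)
    (hgen : ∀ k l : ℤ, a₁ * t ^ k ≠ a₂ * t ^ l) (z : ℕ → ℂ) :
    lagrangeF a₁ a₂ t n i z =
      (z n - a₂ * t ^ ((n : ℤ) - i)) / (a₁ * t ^ ((i : ℤ) - 1) - a₂ * t ^ ((n : ℤ) - i)) *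
          (if i = 0 then 0 else lagrangeF a₁ a₂ t (n - 1) (i - 1) z) +
        (z n - a₁ * t ^ (i : ℤ)) / (a₂ * t ^ ((n : ℤ) - i - 1) - a₁ * t ^ (i : ℤ)) *
          (if i = n then 0 else lagrangeF a₁ a₂ t (n - 1) i z) := by
  obtain ⟨m, rfl⟩ : ∃ m, n = m + 1 := ⟨n - 1, by omega⟩
  have hnotin : (m + 1) ∉ Finset.Icc 1 m := by simp
  have hIcc : Finset.Icc 1 (m + 1) = insert (m + 1) (Finset.Icc 1 m) := by
    ext x
    simp only [Finset.mem_Icc, Finset.mem_insert]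
    omega
  have hempty : lagrangeF a₁ a₂ t m (m + 1) z = 0 := by
    rw [lagrangeF_eq_sum, Finset.powersetCard_eq_empty.mpr (by simp), Finset.sum_empty]
  cases i with
  | zero =>
    simp only [if_pos rfl, mul_zero, zero_add, if_neg (by omega : (0 : ℕ) ≠ m + 1),
      Nat.add_sub_cancel]
    rw [lagrangeF_eq_sum, lagrangeF_eq_sum, Finset.powersetCard_zero,
      Finset.powersetCard_zero, Finset.sum_singleton, Finset.sum_singleton,
      termA a₁ a₂ t z m 0 ∅ (by simp)]
    have e1 : ((m + 1 : ℕ) : ℤ) - ((0 : ℕ) : ℤ) - 1 = ((m - 0 : ℕ) : ℤ) := by push_cast; omega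
    rw [e1, zpow_natCast]
    norm_num
  | succ j =>
    have hj : j ≤ m := by omega
    have hsplit : Finset.powersetCard (j + 1) (Finset.Icc 1 (m + 1)) =
        Finset.powersetCard (j + 1) (Finset.Icc 1 m) ∪
          (Finset.powersetCard j (Finset.Icc 1 m)).image (insert (m + 1)) := by
      rw [hIcc, Finset.powersetCard_succ_insert hnotin]
    have hdisj : Disjoint (Finset.powersetCard (j + 1) (Finset.Icc 1 m))
        ((Finset.powersetCard j (Finset.Icc 1 m)).image (insert (m + 1))) := by
      rw [Finset.disjoint_left]
      intro I hI hI2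
      obtain ⟨A, _, rfl⟩ := Finset.mem_image.mp hI2
      exact hnotin ((Finset.mem_powersetCard.mp hI).1 (Finset.mem_insert_self _ _))
    rw [lagrangeF_eq_sum, hsplit, Finset.sum_union hdisj,
      Finset.sum_image (fun A hA B hB h => by
        have hA' : (m + 1) ∉ A := fun hc => hnotin ((Finset.mem_powersetCard.mp hA).1 hc)
        have hB' : (m + 1) ∉ B := fun hc => hnotin ((Finset.mem_powersetCard.mp hB).1 hc)
        rw [← Finset.erase_insert hA', h, Finset.erase_insert hB'])]
    rw [Finset.sum_congr rfl (fun I hI => termA a₁ a₂ t z m (j + 1) I hI),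
      Finset.sum_congr rfl (fun I hI => termB a₁ a₂ t z m j I hI),
      ← Finset.mul_sum, ← Finset.mul_sum, ← lagrangeF_eq_sum, ← lagrangeF_eq_sum]
    simp only [if_neg (Nat.succ_ne_zero j), Nat.add_sub_cancel, Nat.succ_sub_one]
    have e1 : ((m + 1 : ℕ) : ℤ) - ((j + 1 : ℕ) : ℤ) = ((m - j : ℕ) : ℤ) := by push_cast; omega
    have e2 : ((j + 1 : ℕ) : ℤ) - 1 = ((j : ℕ) : ℤ) := by push_cast; omega
    rw [e1, e2, zpow_natCast, zpow_natCast]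
    rcases Nat.lt_or_ge j m with hlt | hge
    · have e3 : ((m - j : ℕ) : ℤ) - 1 = ((m - (j + 1) : ℕ) : ℤ) := by push_cast [hj]; omega
      rw [e3, if_neg (by omega : j + 1 ≠ m + 1)]
      simp only [zpow_natCast]
      ring
    · have hjm : j = m := le_antisymm hj hge
      subst hjm
      rw [if_pos rfl, hempty]
      simp only [zpow_natCast]
      ring
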